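/- There is a function κ : (0,∞) × (0,∞) → [0,1] with lim_{ε→0} κ(ε,α) = 1 for each fixed α > 0, such that: for any sequence V_n of d(n)-dimensional complex normed spaces (d(n) < ∞), with λ_n the Lebesgue measure on V_n normalized so that λ_n(Ball(V_n)) = 1, and sets A_n ⊆ Ball(V_n) with liminf_n λ_n(A_n)^{1/(2d(n))} ≥ α, one has liminf_n (1/d(n)) d_ε(A_n, ‖·‖_{V_n}) ≥ κ(ε,α). One can take κ(α,ε) = 1 - (log α - log 4 - log(2+4ε)) / log(ε/(2+4ε)). -/

import Mathlib

open Filter MeasureTheory Metric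
open scoped ENNReal

/-- `epsDim A ε` is the minimal (complex) dimension of a linear subspace `W` such that
every point of `A` is within distance `ε` of `W`. -/
noncomputable def epsDim {V : Type*} [NormedAddCommGroup V] [Module ℂ V]
    (A : Set V) (ε : ℝ) : ℕ :=
  sInf {k : ℕ | ∃ W : Submodule ℂ V, Module.finrank ℂ W = k ∧
    ∀ a ∈ A, ∃ w ∈ W, ‖a - w‖ < ε}

lemma sep_card_bound {E : Type*} [NormedAddCommGroup E] [NormedSpace ℝ E]
    [FiniteDimensional ℝ E] [MeasurableSpace E] [BorelSpace E]
    (ν : Measure E) [ν.IsAddHaarMeasure] {S : Finset E} {R ε : ℝ} (hε : 0 < ε) (hR : 0 ≤ R)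
    (hS : ∀ s ∈ S, ‖s‖ ≤ R)
    (hsep : ∀ s ∈ S, ∀ t ∈ S, s ≠ t → ε ≤ ‖s - t‖) :
    (S.card : ℝ) * (ε / 2) ^ (Module.finrank ℝ E) ≤ (R + ε / 2) ^ (Module.finrank ℝ E) := by
  set m := Module.finrank ℝ E
  have hdisj : (S : Set E).PairwiseDisjoint (fun s => ball s (ε / 2)) := by
    intro s hs t ht hst
    apply Set.disjoint_left.2
    intro x hxs hxt
    have : ‖s - t‖ < ε := by
      have h1 : dist s x < ε / 2 := by simpa [dist_comm] using hxs
      have h2 : dist x t < ε / 2 := by simpa using hxt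
      have := dist_triangle s x t
      rw [← dist_eq_norm]
      linarith
    exact absurd this (not_lt.2 (hsep s hs t ht hst))
  have hmeas : ∀ s ∈ S, MeasurableSet (ball s (ε / 2)) := fun s _ => measurableSet_ball
  have hunion : ν (⋃ s ∈ S, ball s (ε / 2)) = ∑ s ∈ S, ν (ball s (ε / 2)) :=
    measure_biUnion_finset hdisj hmeas
  have hval : ∀ s : E, ν (ball s (ε / 2)) = ENNReal.ofReal ((ε / 2) ^ m) * ν (ball 0 1) :=
    fun s => Measure.addHaar_ball_of_pos ν s (by positivity)
  have hsub : (⋃ s ∈ S, ball s (ε / 2)) ⊆ ball 0 (R + ε / 2) := by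
    intro x hx
    simp only [Set.mem_iUnion] at hx
    obtain ⟨s, hs, hxs⟩ := hx
    have : dist x s < ε / 2 := hxs
    have hns : ‖s‖ ≤ R := hS s hs
    simp only [mem_ball, dist_zero_right]
    have hxn : ‖x - s‖ < ε / 2 := by rwa [← dist_eq_norm]
    calc ‖x‖ = ‖x - s + s‖ := by rw [sub_add_cancel]
    _ ≤ ‖x - s‖ + ‖s‖ := norm_add_le _ _
    _ < R + ε / 2 := by linarith
  have hbig : ν (ball 0 (R + ε / 2)) = ENNReal.ofReal ((R + ε / 2) ^ m) * ν (ball 0 1) :=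
    Measure.addHaar_ball_of_pos ν 0 (by positivity)
  have key : (S.card : ℝ≥0∞) * (ENNReal.ofReal ((ε / 2) ^ m) * ν (ball 0 1))
      ≤ ENNReal.ofReal ((R + ε / 2) ^ m) * ν (ball 0 1) := by
    calc (S.card : ℝ≥0∞) * (ENNReal.ofReal ((ε / 2) ^ m) * ν (ball 0 1))
        = ∑ s ∈ S, ν (ball s (ε / 2)) := by
          simp [hval, Finset.sum_const, nsmul_eq_mul]
      _ = ν (⋃ s ∈ S, ball s (ε / 2)) := hunion.symm
      _ ≤ ν (ball 0 (R + ε / 2)) := measure_mono hsub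
      _ = _ := hbig
  have hν0 : ν (ball (0:E) 1) ≠ 0 := (measure_ball_pos ν 0 one_pos).ne'
  have hνt : ν (ball (0:E) 1) ≠ ⊤ := measure_ball_lt_top.ne
  rw [← mul_assoc, ENNReal.mul_le_mul_iff_left hν0 hνt] at key
  have : ENNReal.ofReal ((S.card : ℝ) * (ε / 2) ^ m) ≤ ENNReal.ofReal ((R + ε / 2) ^ m) := by
    rw [ENNReal.ofReal_mul (by positivity)]
    simpa [ENNReal.ofReal_natCast] using key
  exact (ENNReal.ofReal_le_ofReal_iff (by positivity)).1 this

lemma epsDim_set_nonempty {V : Type*} [NormedAddCommGroup V] [NormedSpace ℂ V]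
    [FiniteDimensional ℂ V] (A : Set V) {ε : ℝ} (hε : 0 < ε) :
    Module.finrank ℂ V ∈ {k : ℕ | ∃ W : Submodule ℂ V, Module.finrank ℂ W = k ∧
      ∀ a ∈ A, ∃ w ∈ W, ‖a - w‖ < ε} :=
  ⟨⊤, finrank_top ℂ V, fun a _ => ⟨a, Submodule.mem_top, by simpa using hε⟩⟩

lemma volume_bound {V : Type*} [NormedAddCommGroup V] [NormedSpace ℂ V] [FiniteDimensional ℂ V]
    [MeasurableSpace V] [BorelSpace V] (μ : Measure V) [μ.IsAddHaarMeasure]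
    (hball : μ (closedBall (0:V) 1) = 1) {A : Set V} (hA : A ⊆ closedBall (0:V) 1)
    {ε : ℝ} (hε : 0 < ε) :
    (μ A).toReal ≤ ((2+4*ε)/ε) ^ (2 * epsDim A ε) * (2*ε) ^ (2 * Module.finrank ℂ V) := by
  classical
  set k := epsDim A ε with hk
  obtain ⟨W, hWrank, hWapprox⟩ : ∃ W : Submodule ℂ V, Module.finrank ℂ W = k ∧
      ∀ a ∈ A, ∃ w ∈ W, ‖a - w‖ < ε :=
    Nat.sInf_mem (Set.nonempty_of_mem (epsDim_set_nonempty A hε))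
  letI : MeasurableSpace ↥W := borel ↥W
  haveI : BorelSpace ↥W := ⟨rfl⟩
  set ν : Measure ↥W := (Module.finBasis ℝ ↥W).addHaar with hν
  have hWr : Module.finrank ℝ ↥W = 2 * k := by
    rw [← hWrank, ← Module.finrank_mul_finrank ℝ ℂ ↥W, Complex.finrank_real_complex]
  set B : ℝ := ((2+4*ε)/ε) ^ (2*k) with hB
  -- cardinality bound for ε-separated subsets of the (1+ε)-ball of W
  have cardbound : ∀ S : Finset ↥W, (∀ s ∈ S, ‖s‖ ≤ 1 + ε) →
      (∀ s ∈ S, ∀ t ∈ S, s ≠ t → ε ≤ ‖s - t‖) → (S.card : ℝ) ≤ B := by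
    intro S h1 h2
    have h3 := sep_card_bound ν hε (by linarith : (0:ℝ) ≤ 1 + ε) h1 h2
    rw [hWr] at h3
    have hpos : (0:ℝ) < (ε/2) ^ (2*k) := by positivity
    have h4 : (S.card : ℝ) ≤ ((1 + ε + ε/2) / (ε/2)) ^ (2*k) := by
      rw [div_pow, le_div_iff₀ hpos]; exact h3
    refine h4.trans ?_
    apply pow_le_pow_left₀ (by positivity)
    rw [div_le_div_iff₀ (by positivity) hε]
    ring_nf
    nlinarith
  -- a maximal separated set
  set P : Finset ↥W → Prop := fun S =>
    (∀ s ∈ S, ‖s‖ ≤ 1 + ε) ∧ (∀ s ∈ S, ∀ t ∈ S, s ≠ t → ε ≤ ‖s - t‖) with hP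
  set C : Set ℕ := {n | ∃ S : Finset ↥W, P S ∧ S.card = n} with hC
  have hC0 : 0 ∈ C := ⟨∅, ⟨by simp, by simp⟩, rfl⟩
  have hCb : BddAbove C := by
    refine ⟨Nat.floor B, fun n hn => ?_⟩
    obtain ⟨S, hS, rfl⟩ := hn
    exact Nat.le_floor (cardbound S hS.1 hS.2)
  obtain ⟨S, hSP, hScard⟩ : ∃ S : Finset ↥W, P S ∧ S.card = sSup C :=
    Nat.sSup_mem ⟨0, hC0⟩ hCb
  -- maximality gives covering
  have hcover : ∀ x : ↥W, ‖x‖ ≤ 1 + ε → ∃ s ∈ S, ‖x - s‖ < ε := by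
    intro x hx
    by_contra hcon
    push_neg at hcon
    have hxS : x ∉ S := fun hxS => absurd (by simpa using hcon x hxS) (not_le.2 hε)
    have : P (insert x S) := by
      constructor
      · intro s hs
        rcases Finset.mem_insert.1 hs with rfl | hs
        · exact hx
        · exact hSP.1 s hs
      · intro s hs t ht hst
        rcases Finset.mem_insert.1 hs with hs' | hs' <;>
          rcases Finset.mem_insert.1 ht with ht' | ht'
        · exact absurd (hs'.trans ht'.symm) hst
        · rw [hs']; exact hcon t ht'
        · rw [ht', norm_sub_rev]; exact hcon s hs'
        · exact hSP.2 s hs' t ht' hst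
    have hmem : S.card + 1 ∈ C := ⟨insert x S, this, by rw [Finset.card_insert_of_notMem hxS]⟩
    have := le_csSup hCb hmem
    omega
  -- A is covered by 2ε-balls centered at points of S
  have hAcov : A ⊆ ⋃ s ∈ S, closedBall ((s : V)) (2*ε) := by
    intro a ha
    obtain ⟨w, hwW, hwa⟩ := hWapprox a ha
    have hw1 : ‖w‖ ≤ 1 + ε := by
      have h1 : ‖a‖ ≤ 1 := by simpa using hA ha
      calc ‖w‖ = ‖a - (a - w)‖ := by rw [sub_sub_cancel]
      _ ≤ ‖a‖ + ‖a - w‖ := norm_sub_le _ _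
      _ ≤ 1 + ε := by linarith [hwa.le]
    obtain ⟨s, hsS, hs⟩ := hcover ⟨w, hwW⟩ hw1
    have hs' : ‖w - (s : V)‖ < ε := hs
    simp only [Set.mem_iUnion]
    refine ⟨s, hsS, ?_⟩
    simp only [mem_closedBall, dist_eq_norm]
    calc ‖a - (s : V)‖ = ‖(a - w) + (w - (s:V))‖ := by rw [sub_add_sub_cancel]
    _ ≤ ‖a - w‖ + ‖w - (s:V)‖ := norm_add_le _ _
    _ ≤ 2*ε := by linarith
  -- measure estimate
  have hrV : Module.finrank ℝ V = 2 * Module.finrank ℂ V := by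
    rw [← Module.finrank_mul_finrank ℝ ℂ V, Complex.finrank_real_complex]
  have hballval : ∀ x : V, μ (closedBall x (2*ε))
      = ENNReal.ofReal ((2*ε) ^ (2 * Module.finrank ℂ V)) := by
    intro x
    rw [Measure.addHaar_closedBall' μ x (by positivity), hball, hrV, mul_one]
  have hμA : μ A ≤ ENNReal.ofReal (B * (2*ε) ^ (2 * Module.finrank ℂ V)) := by
    calc μ A ≤ μ (⋃ s ∈ S, closedBall ((s : V)) (2*ε)) := measure_mono hAcov
    _ ≤ ∑ s ∈ S, μ (closedBall ((s : V)) (2*ε)) := measure_biUnion_finset_le S _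
    _ = S.card * ENNReal.ofReal ((2*ε) ^ (2 * Module.finrank ℂ V)) := by
        simp [hballval, Finset.sum_const, nsmul_eq_mul]
    _ ≤ ENNReal.ofReal B * ENNReal.ofReal ((2*ε) ^ (2 * Module.finrank ℂ V)) := by
        apply mul_le_mul_left
        rw [← ENNReal.ofReal_natCast]
        exact ENNReal.ofReal_le_ofReal (cardbound S hSP.1 hSP.2)
    _ = ENNReal.ofReal (B * (2*ε) ^ (2 * Module.finrank ℂ V)) := by
        rw [ENNReal.ofReal_mul (by positivity)]
  exact ENNReal.toReal_le_of_le_ofReal (by positivity) hμA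


lemma log_step {k d : ℕ} (hd : 0 < d) {ε t : ℝ} (hε : 0 < ε) (ht : 0 < t)
    (h : t ≤ ((2+4*ε)/ε) ^ (2*k) * (2*ε) ^ (2*d)) :
    (Real.log (t ^ ((1:ℝ)/(2*(d:ℝ)))) - Real.log (2*ε)) / Real.log ((2+4*ε)/ε)
      ≤ (k:ℝ)/(d:ℝ) := by
  have hq : (1:ℝ) < (2+4*ε)/ε := (one_lt_div hε).2 (by linarith)
  have hL : 0 < Real.log ((2+4*ε)/ε) := Real.log_pos hq
  have hd' : (0:ℝ) < d := by exact_mod_cast hd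
  have hlogt : Real.log t ≤ 2*k * Real.log ((2+4*ε)/ε) + 2*d * Real.log (2*ε) := by
    have h1 : Real.log t ≤ Real.log (((2+4*ε)/ε) ^ (2*k) * (2*ε) ^ (2*d)) :=
      Real.log_le_log ht h
    rw [Real.log_mul (by positivity) (by positivity), Real.log_pow, Real.log_pow] at h1
    push_cast at h1
    linarith
  have hrpow : Real.log (t ^ ((1:ℝ)/(2*(d:ℝ)))) = (1/(2*(d:ℝ))) * Real.log t :=
    Real.log_rpow ht _
  rw [hrpow, div_le_div_iff₀ hL hd']
  have h2d : (0:ℝ) < 2*(d:ℝ) := by linarith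
  rw [div_mul_eq_mul_div, sub_mul, div_mul_eq_mul_div]
  rw [div_sub' h2d.ne', div_le_iff₀ h2d]
  nlinarith [hL.le]

lemma kappa_tendsto (α : ℝ) (hα : 0 < α) :
    Tendsto (fun ε => max 0 (min 1 ((Real.log α - Real.log (2*ε)) / Real.log ((2+4*ε)/ε))))
      (nhdsWithin 0 (Set.Ioi (0:ℝ))) (nhds 1) := by
  set N : ℝ → ℝ := fun ε => Real.log α - Real.log 2 - Real.log (2+4*ε) with hN
  set L : ℝ → ℝ := fun ε => Real.log ((2+4*ε)/ε) with hL
  have hLtop : Tendsto L (nhdsWithin 0 (Set.Ioi (0:ℝ))) atTop := by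
    have h1 : Tendsto (fun ε : ℝ => Real.log (2+4*ε)) (nhdsWithin 0 (Set.Ioi (0:ℝ)))
        (nhds (Real.log 2)) := by
      have : ContinuousAt (fun ε : ℝ => Real.log (2+4*ε)) 0 := by
        apply Real.continuousAt_log (by norm_num) |>.comp
        fun_prop
      simpa using this.continuousWithinAt.tendsto
    have h2 : Tendsto (fun ε : ℝ => -Real.log ε) (nhdsWithin 0 (Set.Ioi (0:ℝ))) atTop :=
      tendsto_neg_atBot_atTop.comp Real.tendsto_log_nhdsGT_zero
    have h3 := h1.add_atTop h2
    apply h3.congr'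
    filter_upwards [self_mem_nhdsWithin] with ε (hε : 0 < ε)
    rw [hL]
    simp only
    rw [Real.log_div (by positivity) hε.ne']
    ring
  have hNlim : Tendsto N (nhdsWithin 0 (Set.Ioi (0:ℝ)))
      (nhds (Real.log α - Real.log 2 - Real.log 2)) := by
    have : ContinuousAt (fun ε : ℝ => Real.log α - Real.log 2 - Real.log (2+4*ε)) 0 := by
      apply ContinuousAt.sub continuousAt_const
      apply Real.continuousAt_log (by norm_num) |>.comp
      fun_prop
    simpa using this.continuousWithinAt.tendsto
  have hdiv : Tendsto (fun ε => N ε / L ε) (nhdsWithin 0 (Set.Ioi (0:ℝ))) (nhds 0) :=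
    hNlim.div_atTop hLtop
  have hg : Tendsto (fun ε => (Real.log α - Real.log (2*ε)) / Real.log ((2+4*ε)/ε))
      (nhdsWithin 0 (Set.Ioi (0:ℝ))) (nhds 1) := by
    have h4 : Tendsto (fun ε => 1 + N ε / L ε) (nhdsWithin 0 (Set.Ioi (0:ℝ))) (nhds 1) := by
      simpa using (tendsto_const_nhds.add hdiv)
    apply h4.congr'
    filter_upwards [self_mem_nhdsWithin] with ε (hε : 0 < ε)
    have hq : (1:ℝ) < (2+4*ε)/ε := (one_lt_div hε).2 (by linarith)
    have hL0 : 0 < L ε := Real.log_pos hq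
    have hid : Real.log α - Real.log (2*ε) = L ε + N ε := by
      rw [hL, hN]
      simp only
      rw [Real.log_mul two_ne_zero hε.ne', Real.log_div (by positivity) hε.ne']
      ring
    rw [hid, add_div, div_self hL0.ne', ]
  have := ((tendsto_const_nhds (x := (1:ℝ))).min hg).max (tendsto_const_nhds (x := (0:ℝ)))
  simpa [max_comm] using this

/-- There is a function `κ : (0,∞) × (0,∞) → [0,1]` with
`lim_{ε → 0⁺} κ(ε, α) = 1` for each fixed `α > 0`, such that: for any sequence `V_n` of
`d(n)`-dimensional complex normed spaces, with `λ_n` the Lebesgue (Haar) measure on `V_n`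
normalized so that `λ_n(Ball(V_n)) = 1`, and sets `A_n ⊆ Ball(V_n)` with
`liminf_n λ_n(A_n)^{1/(2 d(n))} ≥ α`, one has
`liminf_n (1/d(n)) · d_ε(A_n, ‖·‖_{V_n}) ≥ κ(ε, α)`. -/
theorem volume_packing_dimension_lower_bound.{u} :
    ∃ κ : ℝ → ℝ → ℝ,
      (∀ ε α : ℝ, 0 < ε → 0 < α → κ ε α ∈ Set.Icc (0 : ℝ) 1) ∧
      (∀ α : ℝ, 0 < α →
        Tendsto (fun ε => κ ε α) (nhdsWithin 0 (Set.Ioi (0 : ℝ))) (nhds 1)) ∧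
      ∀ (V : ℕ → Type u)
        [∀ n, NormedAddCommGroup (V n)] [∀ n, NormedSpace ℂ (V n)]
        [∀ n, FiniteDimensional ℂ (V n)]
        [∀ n, MeasurableSpace (V n)] [∀ n, BorelSpace (V n)]
        (d : ℕ → ℕ) (hd : ∀ n, d n = Module.finrank ℂ (V n)) (hd0 : ∀ n, 0 < d n)
        (μ : ∀ n, Measure (V n)) (hHaar : ∀ n, (μ n).IsAddHaarMeasure)
        (hball : ∀ n, μ n (closedBall (0 : V n) 1) = 1)
        (A : ∀ n, Set (V n)) (hAmeas : ∀ n, MeasurableSet (A n))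
        (hAball : ∀ n, A n ⊆ closedBall (0 : V n) 1)
        (α ε : ℝ), 0 < α → 0 < ε →
        α ≤ atTop.liminf (fun n => ((μ n) (A n)).toReal ^ ((1 : ℝ) / (2 * d n))) →
        κ ε α ≤ atTop.liminf (fun n => (epsDim (A n) ε : ℝ) / d n) := by
  refine ⟨fun ε α => max 0 (min 1 ((Real.log α - Real.log (2*ε)) / Real.log ((2+4*ε)/ε))),
    fun ε α _ _ => ⟨le_max_left _ _, max_le zero_le_one (min_le_left _ _)⟩,
    fun α hα => kappa_tendsto α hα, ?_⟩
  intro V _ _ _ _ _ d hd hd0 μ hHaar hball A hAmeas hAball α ε hα hε hliminf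
  haveI : ∀ n, (μ n).IsAddHaarMeasure := hHaar
  set β : ℕ → ℝ := fun n => ((μ n) (A n)).toReal ^ ((1 : ℝ) / (2 * d n)) with hβ
  set u : ℕ → ℝ := fun n => (epsDim (A n) ε : ℝ) / d n with hu
  set gα : ℝ := (Real.log α - Real.log (2*ε)) / Real.log ((2+4*ε)/ε) with hgα
  have hq : (1:ℝ) < (2+4*ε)/ε := (one_lt_div hε).2 (by linarith)
  have hL : 0 < Real.log ((2+4*ε)/ε) := Real.log_pos hq
  -- u is bounded
  have hu0 : ∀ n, 0 ≤ u n := fun n => by positivity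
  have hu1 : ∀ n, u n ≤ 1 := by
    intro n
    have h1 : epsDim (A n) ε ≤ Module.finrank ℂ (V n) :=
      Nat.sInf_le (epsDim_set_nonempty (A n) hε)
    have hd' : (0:ℝ) < (d n : ℝ) := by exact_mod_cast hd0 n
    rw [hu]
    rw [div_le_one hd']
    exact_mod_cast (hd n) ▸ h1
  have hucob : atTop.IsCoboundedUnder (· ≥ ·) u :=
    (Filter.IsBoundedUnder.isCoboundedUnder_ge ⟨1, Filter.eventually_map.2
      (Eventually.of_forall hu1)⟩)
  -- it suffices to show x ≤ liminf for every x < κ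
  by_contra hcon
  push_neg at hcon
  obtain ⟨x, hx1, hx2⟩ := exists_between hcon
  have hxle : x ≤ atTop.liminf u := by
    rcases lt_or_ge x 0 with hx0 | hx0
    · exact le_liminf_of_le hucob (Eventually.of_forall fun n => hx0.le.trans (hu0 n))
    · -- extract x < gα
      have hxg : x < gα := by
        rcases lt_max_iff.1 hx2 with h | h
        · exact absurd h (not_lt.2 hx0)
        · exact (lt_min_iff.1 h).2
      set α' : ℝ := α * Real.exp (-((gα - x) * Real.log ((2+4*ε)/ε)) / 2) with hα'
      have hα'pos : 0 < α' := by positivity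
      have hα'lt : α' < α := by
        rw [hα']
        nth_rewrite 2 [← mul_one α]
        apply mul_lt_mul_of_pos_left _ hα
        apply Real.exp_lt_one_iff.2
        have : 0 < (gα - x) * Real.log ((2+4*ε)/ε) := by
          apply mul_pos (by linarith) hL
        linarith
      have hgL : gα * Real.log ((2+4*ε)/ε) = Real.log α - Real.log (2*ε) := by
        rw [hgα]; exact div_mul_cancel₀ _ hL.ne'
      have hxgL : x * Real.log ((2+4*ε)/ε) < Real.log α - Real.log (2*ε) := by
        rw [← hgL]; exact mul_lt_mul_of_pos_right hxg hL
      have hgα' : x < (Real.log α' - Real.log (2*ε)) / Real.log ((2+4*ε)/ε) := by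
        rw [hα', Real.log_mul hα.ne' (Real.exp_ne_zero _), Real.log_exp, lt_div_iff₀ hL]
        linarith
      -- eventually α' < β n
      have hβbdd : atTop.IsBoundedUnder (· ≥ ·) β :=
        ⟨0, Filter.eventually_map.2 (Eventually.of_forall fun n =>
          Real.rpow_nonneg ENNReal.toReal_nonneg _)⟩
      have hev : ∀ᶠ n in atTop, α' < β n :=
        eventually_lt_of_lt_liminf (lt_of_lt_of_le hα'lt hliminf) hβbdd
      refine le_liminf_of_le hucob ?_
      filter_upwards [hev] with n hn
      set t : ℝ := ((μ n) (A n)).toReal with hts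
      have ht : 0 < t := by
        rcases (ENNReal.toReal_nonneg (a := (μ n) (A n))).lt_or_eq with h | h
        · exact h
        · exfalso
          have hd' : ((1:ℝ) / (2 * d n)) ≠ 0 := by
            have : (0:ℝ) < (d n : ℝ) := by exact_mod_cast hd0 n
            positivity
          have ht0 : t = 0 := by rw [hts, ← h]
          have : β n = 0 := by
            rw [hβ]
            show t ^ ((1:ℝ) / (2 * (d n : ℝ))) = 0
            rw [ht0, Real.zero_rpow hd']
          linarith [hn, hα'pos]
      have hvb := volume_bound (μ n) (hball n) (hAball n) hε
      rw [← hd n, ← hts] at hvb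
      have hls := log_step (hd0 n) hε ht hvb
      have hβn : Real.log (t ^ ((1:ℝ)/(2*(d n : ℝ)))) = Real.log (β n) := by
        rw [hβ]
      rw [hβn] at hls
      have hmono : (Real.log α' - Real.log (2*ε)) / Real.log ((2+4*ε)/ε)
          ≤ (Real.log (β n) - Real.log (2*ε)) / Real.log ((2+4*ε)/ε) := by
        have h9 := Real.log_le_log hα'pos hn.le
        gcongr
      calc x ≤ (Real.log α' - Real.log (2*ε)) / Real.log ((2+4*ε)/ε) := hgα'.le
      _ ≤ (Real.log (β n) - Real.log (2*ε)) / Real.log ((2+4*ε)/ε) := hmono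
      _ ≤ u n := hls
  exact absurd hxle (not_le.2 hx1)
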